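/- Let φ be a ring automorphism of I(X,R) that is multiplicative, i.e. φ(f) = f for every f ∈ L and φ maps M into M, where L = {f ∈ I(X,R) : f x y = 0 unless x ≤ y and y ≤ x} and M = {f ∈ I(X,R) : f x y = 0 whenever x ≤ y and y ≤ x}. If φ is inner, i.e. there is a unit u of I(X,R) with φ(f) = u⁻¹·f·u for all f, then there exists a unit v of I(X,R) such that v ∈ L, v commutes with every element of L, and φ(f) = v⁻¹·f·v for all f ∈ I(X,R). -/

import Mathlib

open Finset

/-- The "matrix unit" `e_x` supported at `(x,x)` with value `1`. -/
private def eDiag {X R : Type*} [Preorder X] [DecidableEq X] [Ring R] (x : X) :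
    IncidenceAlgebra R X :=
  ⟨fun a b => if a = x ∧ b = x then 1 else 0, by
    intro a b hab
    split_ifs with h
    · obtain ⟨rfl, rfl⟩ := h
      exact (hab le_rfl).elim
    · rfl⟩

/-- An inner multiplicative automorphism of the incidence algebra of a
locally finite preordered set is defined by a unit `v` lying in the subring `L` and
central therein (Proposition 3.1). -/
theorem inner_mult_aut_is_fractional_preorder {X R : Type*} [Preorder X]
    [LocallyFiniteOrder X] [DecidableEq X] [Ring R]
    (φ : RingAut (IncidenceAlgebra R X))
    (hL : ∀ f : IncidenceAlgebra R X,
      (∀ x y : X, ¬(x ≤ y ∧ y ≤ x) → f x y = 0) → φ f = f)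
    (hM : ∀ f : IncidenceAlgebra R X,
      (∀ x y : X, (x ≤ y ∧ y ≤ x) → f x y = 0) →
        ∀ x y : X, (x ≤ y ∧ y ≤ x) → (φ f) x y = 0)
    (u : (IncidenceAlgebra R X)ˣ)
    (hu : ∀ f : IncidenceAlgebra R X, φ f = ↑u⁻¹ * f * ↑u) :
    ∃ v : (IncidenceAlgebra R X)ˣ,
      (∀ x y : X, ¬(x ≤ y ∧ y ≤ x) → (v : IncidenceAlgebra R X) x y = 0) ∧
      (∀ g : IncidenceAlgebra R X, (∀ x y : X, ¬(x ≤ y ∧ y ≤ x) → g x y = 0) →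
        (v : IncidenceAlgebra R X) * g = g * (v : IncidenceAlgebra R X)) ∧
      (∀ f : IncidenceAlgebra R X, φ f = ↑v⁻¹ * f * ↑v) := by
  -- Every `g ∈ L` commutes with `u`.
  have hcomm : ∀ g : IncidenceAlgebra R X,
      (∀ x y : X, ¬(x ≤ y ∧ y ≤ x) → g x y = 0) →
      (u : IncidenceAlgebra R X) * g = g * (u : IncidenceAlgebra R X) := by
    intro g hg
    have h1 : (↑u⁻¹ : IncidenceAlgebra R X) * g * ↑u = g := by rw [← hu g, hL g hg]
    calc (u : IncidenceAlgebra R X) * g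
        = ↑u * (↑u⁻¹ * g * ↑u) := by rw [h1]
      _ = (↑u * ↑u⁻¹) * g * ↑u := by rw [← mul_assoc, ← mul_assoc]
      _ = g * ↑u := by rw [u.mul_inv, one_mul]
  -- `u` is diagonal: `u x y = 0` for `x ≠ y`.
  have hdiag : ∀ x y : X, x ≠ y → (u : IncidenceAlgebra R X) x y = 0 := by
    intro x y hxy
    by_cases hle : x ≤ y
    · have he : ∀ a b : X, ¬(a ≤ b ∧ b ≤ a) → (eDiag (R := R) x) a b = 0 := by
        intro a b hab
        simp only [eDiag, IncidenceAlgebra.coe_mk]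
        split_ifs with h
        · obtain ⟨rfl, rfl⟩ := h
          exact (hab ⟨le_rfl, le_rfl⟩).elim
        · rfl
      have hc := hcomm (eDiag (R := R) x) he
      have hxy2 := congr_fun (DFunLike.congr_fun hc x) y
      rw [IncidenceAlgebra.mul_apply, IncidenceAlgebra.mul_apply] at hxy2
      have hxmem : x ∈ Icc x y := Finset.mem_Icc.2 ⟨le_rfl, hle⟩
      rw [Finset.sum_eq_single_of_mem x hxmem
          (fun b _ hb => by
            simp only [eDiag, IncidenceAlgebra.coe_mk]
            rw [if_neg (fun h => hb h.1), mul_zero]),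
        Finset.sum_eq_single_of_mem x hxmem
          (fun b _ hb => by
            simp only [eDiag, IncidenceAlgebra.coe_mk]
            rw [if_neg (fun h => hb h.2), zero_mul])] at hxy2
      simp only [eDiag, IncidenceAlgebra.coe_mk] at hxy2
      simpa [Ne.symm hxy] using hxy2.symm
    · exact IncidenceAlgebra.apply_eq_zero_of_not_le hle _
  refine ⟨u, ?_, hcomm, hu⟩
  intro x y hxy
  rcases eq_or_ne x y with rfl | h
  · exact absurd ⟨le_refl x, le_refl x⟩ hxy
  · exact hdiag x y h
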